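/- arXiv:1603.05034 — 3 statements merged into one kernel-verified Lean document; each statement's English description precedes it below -/
import Mathlib

section
/- (Theorem 1, dual part.) For every θ ∈ ℝⁿ, the extended dual solution for the enlarged active set A_j = A_i ∪ {j} satisfies the rank-one update identity λ̃_{A_j}(θ) = λ̃_{A_i}(θ) − d̃_j (c_j + v_jᵀ θ) in ℝ^{n_c}. Equivalently: the component of λ_{A_j}(θ) corresponding to an index k ∈ A_i equals the corresponding component of λ_{A_i}(θ) minus (W⁻¹w)_k (c_j + v_jᵀθ), and the component of λ_{A_j}(θ) corresponding to the index j equals c_j + v_jᵀθ. -/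
open Matrix

noncomputable section
namespace MpQP

/-- Submatrix of the rows of `G` indexed by the finite index set `A`. -/
def subRows {nc p : ℕ} (G : Matrix (Fin nc) (Fin p) ℝ) (A : Finset (Fin nc)) :
    Matrix A (Fin p) ℝ := Matrix.of fun i k => G i.val k

/-- Subvector of `b` indexed by `A`. -/
def subVec {nc : ℕ} (b : Fin nc → ℝ) (A : Finset (Fin nc)) : A → ℝ := fun i => b i.val

/-- `G_A` has full row rank, i.e. the rows of `G` indexed by `A` are linearly independent. -/
def FullRowRank {nc m : ℕ} (G : Matrix (Fin nc) (Fin m) ℝ) (A : Finset (Fin nc)) : Prop :=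
  LinearIndependent ℝ (fun i : A => G i.val)

/-- The parametric dual solution `λ_A(θ) = −(G_A H⁻¹ G_Aᵀ)⁻¹ (b_A + S_A θ)`. -/
def lamOf {m n nc : ℕ} (H : Matrix (Fin m) (Fin m) ℝ) (G : Matrix (Fin nc) (Fin m) ℝ)
    (b : Fin nc → ℝ) (S : Matrix (Fin nc) (Fin n) ℝ) (A : Finset (Fin nc))
    (θ : Fin n → ℝ) : A → ℝ :=
  -((subRows G A * H⁻¹ * (subRows G A)ᵀ)⁻¹.mulVec
      (fun i => b i.val + S.mulVec θ i.val))

/-- The parametric primal solution `z_A(θ) = −H⁻¹ G_Aᵀ λ_A(θ)`. -/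
def zOf {m n nc : ℕ} (H : Matrix (Fin m) (Fin m) ℝ) (G : Matrix (Fin nc) (Fin m) ℝ)
    (b : Fin nc → ℝ) (S : Matrix (Fin nc) (Fin n) ℝ) (A : Finset (Fin nc))
    (θ : Fin n → ℝ) : Fin m → ℝ :=
  -((H⁻¹ * (subRows G A)ᵀ).mulVec (lamOf H G b S A θ))

/-- `λ̃_A(θ) ∈ ℝ^{n_c}`: the dual solution extended by zeros outside `A`. -/
def lamExt {m n nc : ℕ} (H : Matrix (Fin m) (Fin m) ℝ) (G : Matrix (Fin nc) (Fin m) ℝ)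
    (b : Fin nc → ℝ) (S : Matrix (Fin nc) (Fin n) ℝ) (A : Finset (Fin nc))
    (θ : Fin n → ℝ) : Fin nc → ℝ :=
  fun k => if h : k ∈ A then lamOf H G b S A θ ⟨k, h⟩ else 0

/-- `W = G_A H⁻¹ G_Aᵀ`. -/
def Wmat {m nc : ℕ} (H : Matrix (Fin m) (Fin m) ℝ) (G : Matrix (Fin nc) (Fin m) ℝ)
    (A : Finset (Fin nc)) : Matrix A A ℝ :=
  subRows G A * H⁻¹ * (subRows G A)ᵀ

/-- `w = G_A H⁻¹ G_jᵀ`. -/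
def wvec {m nc : ℕ} (H : Matrix (Fin m) (Fin m) ℝ) (G : Matrix (Fin nc) (Fin m) ℝ)
    (A : Finset (Fin nc)) (j : Fin nc) : A → ℝ :=
  (subRows G A * H⁻¹).mulVec (G j)

/-- `w₀ = G_j H⁻¹ G_jᵀ`. -/
def w0 {m nc : ℕ} (H : Matrix (Fin m) (Fin m) ℝ) (G : Matrix (Fin nc) (Fin m) ℝ)
    (j : Fin nc) : ℝ :=
  G j ⬝ᵥ H⁻¹.mulVec (G j)

/-- The Schur complement `C = w₀ − wᵀ W⁻¹ w`. -/
def Cval {m nc : ℕ} (H : Matrix (Fin m) (Fin m) ℝ) (G : Matrix (Fin nc) (Fin m) ℝ)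
    (A : Finset (Fin nc)) (j : Fin nc) : ℝ :=
  w0 H G j - wvec H G A j ⬝ᵥ (Wmat H G A)⁻¹.mulVec (wvec H G A j)

/-- `c_j = C⁻¹ (wᵀ W⁻¹ b_A − b_j)`. -/
def cVal {m nc : ℕ} (H : Matrix (Fin m) (Fin m) ℝ) (G : Matrix (Fin nc) (Fin m) ℝ)
    (b : Fin nc → ℝ) (A : Finset (Fin nc)) (j : Fin nc) : ℝ :=
  (Cval H G A j)⁻¹ * (wvec H G A j ⬝ᵥ (Wmat H G A)⁻¹.mulVec (subVec b A) - b j)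

/-- `v_j = C⁻¹ (S_Aᵀ W⁻¹ w − S_jᵀ)`. -/
def vVec {m n nc : ℕ} (H : Matrix (Fin m) (Fin m) ℝ) (G : Matrix (Fin nc) (Fin m) ℝ)
    (S : Matrix (Fin nc) (Fin n) ℝ) (A : Finset (Fin nc)) (j : Fin nc) : Fin n → ℝ :=
  (Cval H G A j)⁻¹ •
    ((subRows S A)ᵀ.mulVec ((Wmat H G A)⁻¹.mulVec (wvec H G A j)) - S j)

/-- `d̃_j ∈ ℝ^{n_c}`: equal to `W⁻¹ w` on `A`, to `−1` at index `j`, and `0` elsewhere. -/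
def dExt {m nc : ℕ} (H : Matrix (Fin m) (Fin m) ℝ) (G : Matrix (Fin nc) (Fin m) ℝ)
    (A : Finset (Fin nc)) (j : Fin nc) : Fin nc → ℝ :=
  fun k =>
    if h : k ∈ A then (Wmat H G A)⁻¹.mulVec (wvec H G A j) ⟨k, h⟩
    else if k = j then -1 else 0

/-- `f_j = H⁻¹ G_{A ∪ {j}}ᵀ (d̃_j restricted to A ∪ {j})`. -/
def fVec {m nc : ℕ} (H : Matrix (Fin m) (Fin m) ℝ) (G : Matrix (Fin nc) (Fin m) ℝ)
    (A : Finset (Fin nc)) (j : Fin nc) : Fin m → ℝ :=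
  (H⁻¹ * (subRows G (insert j A))ᵀ).mulVec (fun i => dExt H G A j i.val)



/-! ### Auxiliary lemmas -/

section Aux

variable {m n nc : ℕ}

lemma htinv {H : Matrix (Fin m) (Fin m) ℝ} (hH : H.PosDef) : (H⁻¹)ᵀ = H⁻¹ := by
  rw [Matrix.transpose_nonsing_inv]
  congr 1
  have := hH.isHermitian.eq
  rwa [Matrix.conjTranspose_eq_transpose_of_trivial] at this

lemma quadSym {H : Matrix (Fin m) (Fin m) ℝ} (hH : H.PosDef) (x y : Fin m → ℝ) :
    x ⬝ᵥ H⁻¹ *ᵥ y = y ⬝ᵥ H⁻¹ *ᵥ x := by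
  rw [Matrix.dotProduct_mulVec, ← Matrix.mulVec_transpose, htinv hH, dotProduct_comm]

lemma Wmat_apply (H : Matrix (Fin m) (Fin m) ℝ) (G : Matrix (Fin nc) (Fin m) ℝ)
    (A : Finset (Fin nc)) (a c : A) :
    Wmat H G A a c = G a.1 ⬝ᵥ H⁻¹ *ᵥ (G c.1) := by
  simp only [Wmat, subRows, Matrix.mul_apply, Matrix.transpose_apply, Matrix.of_apply,
    Matrix.mulVec, dotProduct, Finset.sum_mul, Finset.mul_sum]
  rw [Finset.sum_comm]
  apply Finset.sum_congr rfl; intro x _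
  apply Finset.sum_congr rfl; intro y _
  ring

lemma wvec_apply (H : Matrix (Fin m) (Fin m) ℝ) (G : Matrix (Fin nc) (Fin m) ℝ)
    (A : Finset (Fin nc)) (j : Fin nc) (a : A) :
    wvec H G A j a = G a.1 ⬝ᵥ H⁻¹ *ᵥ (G j) := by
  simp only [wvec, subRows, Matrix.mul_apply, Matrix.of_apply, Matrix.mulVec, dotProduct,
    Finset.sum_mul, Finset.mul_sum]
  rw [Finset.sum_comm]
  apply Finset.sum_congr rfl; intro x _
  apply Finset.sum_congr rfl; intro y _
  ring

lemma subRows_mulVec (S : Matrix (Fin nc) (Fin n) ℝ) (A : Finset (Fin nc))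
    (θ : Fin n → ℝ) (a : A) : (subRows S A *ᵥ θ) a = (S *ᵥ θ) a.1 := rfl

lemma sum_insert_attach {A : Finset (Fin nc)} {j : Fin nc} (hj : j ∉ A)
    (f : ↥(insert j A) → ℝ) :
    ∑ q : ↥(insert j A), f q =
      f ⟨j, Finset.mem_insert_self j A⟩ +
        ∑ q : ↥A, f ⟨q.1, Finset.mem_insert_of_mem q.2⟩ := by
  rw [Finset.univ_eq_attach, Finset.attach_insert, Finset.sum_insert, Finset.sum_image,
    Finset.univ_eq_attach]
  · intro x _ y _ h
    injection h with h'
    exact Subtype.ext h'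
  · intro hmem
    obtain ⟨x, _, hx⟩ := Finset.mem_image.mp hmem
    have : x.1 = j := congrArg Subtype.val hx
    exact hj (this ▸ x.2)

lemma Wmat_posDef {H : Matrix (Fin m) (Fin m) ℝ} (hH : H.PosDef)
    {G : Matrix (Fin nc) (Fin m) ℝ} {A : Finset (Fin nc)} (hA : FullRowRank G A) :
    (Wmat H G A).PosDef := by
  have hinv : (H⁻¹).PosDef := hH.inv
  refine Matrix.PosDef.of_dotProduct_mulVec_pos ?_ ?_
  · have : (Wmat H G A)ᴴ = (Wmat H G A)ᵀ :=
      Matrix.conjTranspose_eq_transpose_of_trivial _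
    rw [Matrix.IsHermitian, this]
    ext a c
    rw [Matrix.transpose_apply, Wmat_apply, Wmat_apply, quadSym hH]
  · intro x hx
    have hy : (x ᵥ* subRows G A) ≠ 0 := by
      intro h0
      apply hx
      have hli := Fintype.linearIndependent_iff.mp hA x ?_
      · ext i; exact hli i
      · ext k
        have := congrFun h0 k
        simpa [Matrix.vecMul, dotProduct, subRows, Finset.sum_apply] using this
    have := hinv.dotProduct_mulVec_pos hy
    simpa [Wmat, star_trivial, ← Matrix.mulVec_mulVec, Matrix.dotProduct_mulVec,
      Matrix.mulVec_transpose] using this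

/-- Action of the enlarged `W` on a blended vector. -/
lemma Wins_mulVec {H : Matrix (Fin m) (Fin m) ℝ} (hH : H.PosDef)
    (G : Matrix (Fin nc) (Fin m) ℝ) {A : Finset (Fin nc)} {j : Fin nc} (hj : j ∉ A)
    (x : A → ℝ) (β : ℝ) :
    ∀ p : ↥(insert j A),
      (Wmat H G (insert j A) *ᵥ
          (fun q : ↥(insert j A) => if h : q.1 ∈ A then x ⟨q.1, h⟩ else β)) p =
        (if h : p.1 ∈ A then
            (Wmat H G A *ᵥ x) ⟨p.1, h⟩ + β * wvec H G A j ⟨p.1, h⟩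
          else wvec H G A j ⬝ᵥ x + β * w0 H G j) := by
  intro p
  have hsum : (Wmat H G (insert j A) *ᵥ
      (fun q : ↥(insert j A) => if h : q.1 ∈ A then x ⟨q.1, h⟩ else β)) p =
      Wmat H G (insert j A) p ⟨j, Finset.mem_insert_self j A⟩ * β +
        ∑ q : ↥A, Wmat H G (insert j A) p ⟨q.1, Finset.mem_insert_of_mem q.2⟩ * x q := by
    rw [Matrix.mulVec, dotProduct, sum_insert_attach hj]
    congr 1
    · rw [dif_neg hj]
    · apply Finset.sum_congr rfl; intro q _
      rw [dif_pos q.2]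
  rw [hsum]
  by_cases h : p.1 ∈ A
  · rw [dif_pos h]
    have h1 : Wmat H G (insert j A) p ⟨j, Finset.mem_insert_self j A⟩
        = wvec H G A j ⟨p.1, h⟩ := by
      rw [Wmat_apply, wvec_apply]
    have h2 : ∀ q : ↥A, Wmat H G (insert j A) p ⟨q.1, Finset.mem_insert_of_mem q.2⟩
        = Wmat H G A ⟨p.1, h⟩ q := by
      intro q; rw [Wmat_apply, Wmat_apply]
    rw [h1]
    simp only [h2]
    rw [Matrix.mulVec, dotProduct, Finset.univ_eq_attach]
    ring
  · rw [dif_neg h]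
    have hpj : p.1 = j := by
      rcases Finset.mem_insert.mp p.2 with h' | h'
      · exact h'
      · exact absurd h' h
    have h1 : Wmat H G (insert j A) p ⟨j, Finset.mem_insert_self j A⟩ = w0 H G j := by
      rw [Wmat_apply, hpj]; rfl
    have h2 : ∀ q : ↥A, Wmat H G (insert j A) p ⟨q.1, Finset.mem_insert_of_mem q.2⟩
        = wvec H G A j q := by
      intro q
      rw [Wmat_apply, wvec_apply, hpj, quadSym hH]
    rw [h1]
    simp only [h2]
    rw [dotProduct, Finset.univ_eq_attach]
    ring

lemma Cval_pos {H : Matrix (Fin m) (Fin m) ℝ} (hH : H.PosDef)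
    {G : Matrix (Fin nc) (Fin m) ℝ} {A : Finset (Fin nc)} {j : Fin nc} (hj : j ∉ A)
    (hA : FullRowRank G A) (hAj : FullRowRank G (insert j A)) :
    0 < Cval H G A j := by
  have hW : (Wmat H G A).PosDef := Wmat_posDef hH hA
  have hW' : (Wmat H G (insert j A)).PosDef := Wmat_posDef hH hAj
  have hdet : IsUnit (Wmat H G A).det := isUnit_iff_ne_zero.mpr hW.det_pos.ne'
  set u : A → ℝ := (Wmat H G A)⁻¹ *ᵥ wvec H G A j with hu
  set g : ↥(insert j A) → ℝ := fun q => if h : q.1 ∈ A then u ⟨q.1, h⟩ else (-1 : ℝ) with hg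
  have hWu : Wmat H G A *ᵥ u = wvec H G A j := by
    rw [hu, Matrix.mulVec_mulVec, Matrix.mul_nonsing_inv _ hdet, Matrix.one_mulVec]
  have hgne : g ≠ 0 := by
    intro h0
    have := congrFun h0 ⟨j, Finset.mem_insert_self j A⟩
    rw [hg] at this
    simp only [dif_neg hj] at this
    norm_num at this
  have hq := hW'.dotProduct_mulVec_pos hgne
  have hmv := Wins_mulVec hH G hj u (-1)
  have hval : g ⬝ᵥ (Wmat H G (insert j A) *ᵥ g) = Cval H G A j := by
    rw [dotProduct, sum_insert_attach hj]
    have hjterm : (Wmat H G (insert j A) *ᵥ g) ⟨j, Finset.mem_insert_self j A⟩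
        = -(Cval H G A j) := by
      rw [hmv ⟨j, Finset.mem_insert_self j A⟩]
      rw [dif_neg hj, Cval]
      ring
    have hAterm : ∀ q : ↥A,
        (Wmat H G (insert j A) *ᵥ g) ⟨q.1, Finset.mem_insert_of_mem q.2⟩ = 0 := by
      intro q
      rw [hmv ⟨q.1, Finset.mem_insert_of_mem q.2⟩]
      simp only [dif_pos q.2]
      rw [hWu]
      ring
    rw [hjterm]
    have : ∀ q : ↥A, g ⟨q.1, Finset.mem_insert_of_mem q.2⟩ *
        (Wmat H G (insert j A) *ᵥ g) ⟨q.1, Finset.mem_insert_of_mem q.2⟩ = 0 := by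
      intro q; rw [hAterm q]; ring
    rw [Finset.sum_congr rfl (fun q _ => this q), Finset.sum_const_zero]
    show g ⟨j, Finset.mem_insert_self j A⟩ * _ + 0 = _
    rw [hg]
    simp only [dif_neg hj]
    ring
  rw [← hval]
  simpa [star_trivial] using hq

end Aux

/-- Theorem 1, dual part: the extended dual solution for the enlarged active set
`A_j = A_i ∪ {j}` is a rank-one update of the one for `A_i`:
`λ̃_{A_j}(θ) = λ̃_{A_i}(θ) − (c_j + v_jᵀθ) d̃_j`. -/
theorem dual_rankOne_update_add
    {m n nc : ℕ} (H : Matrix (Fin m) (Fin m) ℝ) (hH : H.PosDef)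
    (G : Matrix (Fin nc) (Fin m) ℝ) (b : Fin nc → ℝ) (S : Matrix (Fin nc) (Fin n) ℝ)
    (Ai : Finset (Fin nc)) (j : Fin nc) (hj : j ∉ Ai)
    (hAi : FullRowRank G Ai) (hAj : FullRowRank G (insert j Ai)) :
    ∀ θ : Fin n → ℝ,
      lamExt H G b S (insert j Ai) θ =
        lamExt H G b S Ai θ -
          (cVal H G b Ai j + vVec H G S Ai j ⬝ᵥ θ) • dExt H G Ai j := by
  intro θ
  classical
  have hW : (Wmat H G Ai).PosDef := Wmat_posDef hH hAi
  have hW' : (Wmat H G (insert j Ai)).PosDef := Wmat_posDef hH hAj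
  have hdet : IsUnit (Wmat H G Ai).det := isUnit_iff_ne_zero.mpr hW.det_pos.ne'
  have hdet' : IsUnit (Wmat H G (insert j Ai)).det :=
    isUnit_iff_ne_zero.mpr hW'.det_pos.ne'
  have hC : Cval H G Ai j ≠ 0 := (Cval_pos hH hj hAi hAj).ne'
  set α : ℝ := cVal H G b Ai j + vVec H G S Ai j ⬝ᵥ θ with hα
  set u : Ai → ℝ := (Wmat H G Ai)⁻¹ *ᵥ wvec H G Ai j with hu
  set rA : Ai → ℝ := fun i => b i.1 + (S *ᵥ θ) i.1 with hrA
  have hWu : Wmat H G Ai *ᵥ u = wvec H G Ai j := by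
    rw [hu, Matrix.mulVec_mulVec, Matrix.mul_nonsing_inv _ hdet, Matrix.one_mulVec]
  set lamA : Ai → ℝ := lamOf H G b S Ai θ with hlam
  have hWlam : Wmat H G Ai *ᵥ lamA = -rA := by
    rw [hlam, lamOf, Matrix.mulVec_neg, Matrix.mulVec_mulVec]
    show -((Wmat H G Ai * (Wmat H G Ai)⁻¹) *ᵥ rA) = -rA
    rw [Matrix.mul_nonsing_inv _ hdet, Matrix.one_mulVec]
  -- the key identity for α
  have hWsym : ((Wmat H G Ai)⁻¹)ᵀ = (Wmat H G Ai)⁻¹ := by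
    rw [Matrix.transpose_nonsing_inv]
    congr 1
    have := hW.isHermitian.eq
    rwa [Matrix.conjTranspose_eq_transpose_of_trivial] at this
  have hdotsym : ∀ y : Ai → ℝ,
      wvec H G Ai j ⬝ᵥ ((Wmat H G Ai)⁻¹ *ᵥ y) = u ⬝ᵥ y := by
    intro y
    rw [Matrix.dotProduct_mulVec, ← Matrix.mulVec_transpose, hWsym]
  have hCα : Cval H G Ai j * α = wvec H G Ai j ⬝ᵥ ((Wmat H G Ai)⁻¹ *ᵥ rA)
      - (b j + (S *ᵥ θ) j) := by
    have hsplit : (Wmat H G Ai)⁻¹ *ᵥ rA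
        = (Wmat H G Ai)⁻¹ *ᵥ (subVec b Ai) + (Wmat H G Ai)⁻¹ *ᵥ (fun i => (S *ᵥ θ) i.1) := by
      rw [← Matrix.mulVec_add]; rfl
    rw [hsplit, dotProduct_add]
    have e1 : ((subRows S Ai)ᵀ *ᵥ u) ⬝ᵥ θ = u ⬝ᵥ (fun i : Ai => (S *ᵥ θ) i.1) := by
      rw [Matrix.mulVec_transpose, ← Matrix.dotProduct_mulVec]
      rfl
    have hv : vVec H G S Ai j ⬝ᵥ θ
        = (Cval H G Ai j)⁻¹ * (u ⬝ᵥ (fun i : Ai => (S *ᵥ θ) i.1) - (S *ᵥ θ) j) := by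
      rw [vVec, ← hu, smul_dotProduct, sub_dotProduct, e1, smul_eq_mul]
      rfl
    rw [hα, cVal, hv, hdotsym, hdotsym]
    field_simp
    ring
  -- the blended vector
  set g : ↥(insert j Ai) → ℝ :=
    fun q => if h : q.1 ∈ Ai then lamA ⟨q.1, h⟩ - α * u ⟨q.1, h⟩ else α with hg
  have hmv := Wins_mulVec hH G hj (fun q => lamA q - α * u q) α
  have hg' : g = fun q : ↥(insert j Ai) =>
      if h : q.1 ∈ Ai then (fun q => lamA q - α * u q) ⟨q.1, h⟩ else α := rfl
  have hWg : Wmat H G (insert j Ai) *ᵥ g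
      = -(fun q : ↥(insert j Ai) => b q.1 + (S *ᵥ θ) q.1) := by
    ext p
    rw [hg', hmv p]
    by_cases h : p.1 ∈ Ai
    · rw [dif_pos h]
      have hlin : Wmat H G Ai *ᵥ (fun q => lamA q - α * u q)
          = (Wmat H G Ai *ᵥ lamA) - α • (Wmat H G Ai *ᵥ u) := by
        have hfun : (fun q => lamA q - α * u q) = lamA - α • u := by
          ext q; simp [smul_eq_mul]
        rw [hfun, Matrix.mulVec_sub, Matrix.mulVec_smul]
      rw [hlin, hWlam, hWu]
      simp only [Pi.sub_apply, Pi.neg_apply, Pi.smul_apply, smul_eq_mul]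
      rw [hrA]
      ring
    · rw [dif_neg h]
      have hpj : p.1 = j := by
        rcases Finset.mem_insert.mp p.2 with h' | h'
        · exact h'
        · exact absurd h' h
      have hwdot : wvec H G Ai j ⬝ᵥ (fun q => lamA q - α * u q)
          = wvec H G Ai j ⬝ᵥ lamA - α * (wvec H G Ai j ⬝ᵥ u) := by
        rw [dotProduct, dotProduct, dotProduct, Finset.mul_sum, ← Finset.sum_sub_distrib]
        apply Finset.sum_congr rfl; intro q _; ring
      have hlamdot : wvec H G Ai j ⬝ᵥ lamA
          = -(wvec H G Ai j ⬝ᵥ ((Wmat H G Ai)⁻¹ *ᵥ rA)) := by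
        rw [hlam, lamOf, dotProduct_neg]
        rfl
      have hwu : wvec H G Ai j ⬝ᵥ u
          = wvec H G Ai j ⬝ᵥ ((Wmat H G Ai)⁻¹ *ᵥ wvec H G Ai j) := rfl
      rw [hwdot, hlamdot, Pi.neg_apply, hpj]
      rw [Cval] at hCα
      nlinarith [hCα]
  -- conclude lamOf for the enlarged set equals g
  have hlamj : lamOf H G b S (insert j Ai) θ = g := by
    have h1 : (Wmat H G (insert j Ai))⁻¹ *ᵥ (Wmat H G (insert j Ai) *ᵥ g) = g := by
      rw [Matrix.mulVec_mulVec, Matrix.nonsing_inv_mul _ hdet', Matrix.one_mulVec]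
    rw [lamOf]
    show -((Wmat H G (insert j Ai))⁻¹ *ᵥ (fun q : ↥(insert j Ai) => b q.1 + (S *ᵥ θ) q.1)) = g
    rw [← h1, hWg, Matrix.mulVec_neg]
  -- final componentwise check
  funext k
  simp only [lamExt, Pi.sub_apply, Pi.smul_apply, smul_eq_mul, dExt]
  by_cases hk : k ∈ Ai
  · have hk' : k ∈ insert j Ai := Finset.mem_insert_of_mem hk
    rw [dif_pos hk', dif_pos hk, dif_pos hk, hlamj, hg]
    simp only [dif_pos hk]
    rfl
  · by_cases hkj : k = j
    · subst hkj
      rw [dif_pos (Finset.mem_insert_self k Ai), dif_neg hk, dif_neg hk, if_pos rfl, hlamj, hg]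
      simp only [dif_neg hk]
      ring
    · have : k ∉ insert j Ai := by
        simp [Finset.mem_insert, hk, hkj]
      rw [dif_neg this, dif_neg hk, dif_neg hk, if_neg hkj]
      ring


end MpQP
end
end

section
/- (Theorem 3, primal part.) Let A_0, A_1, …, A_K ⊆ {1,…,n_c} be a sequence of index sets such that each G_{A_l} has full row rank, and for each l ∈ {1,…,K} either A_l = A_{l−1} ∪ {j_l} for some j_l ∉ A_{l−1}, or A_l = A_{l−1} \ {j_l} for some j_l ∈ A_{l−1}. For each l define the scalar c_l, the vector v_l ∈ ℝⁿ, and the vector f_l ∈ ℝ^m as follows: if A_l = A_{l−1} ∪ {j_l}, they are the update quantities c_j, v_j, f_j of Theorem 1 applied with A_i = A_{l−1} and j = j_l; if A_l = A_{l−1} \ {j_l}, they are the quantities c_j, v_j, −f_j of Theorem 1 applied with A_i = A_l and j = j_l. Then for every θ ∈ ℝⁿ, z_{A_K}(θ) = z_{A_0}(θ) + Σ_{l=1}^{K} f_l (c_l + v_lᵀθ). -/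
open Matrix

noncomputable section
namespace MpQP

section Helpers
variable {m n nc : ℕ} (H : Matrix (Fin m) (Fin m) ℝ) (G : Matrix (Fin nc) (Fin m) ℝ)

lemma dot_tr_mulVec {a b : Type*} [Fintype a] [Fintype b] (M : Matrix a b ℝ)
    (x : a → ℝ) (y : b → ℝ) : (Mᵀ *ᵥ x) ⬝ᵥ y = x ⬝ᵥ (M *ᵥ y) := by
  rw [dotProduct_comm, dotProduct_mulVec, vecMul_transpose, dotProduct_comm]

lemma sum_subtype_dite (A : Finset (Fin nc)) (g : Fin nc → ℝ) (μ : A → ℝ) :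
    ∑ i : A, g i * μ i = ∑ i : Fin nc, (if h : i ∈ A then g i * μ ⟨i, h⟩ else 0) := by
  rw [← Finset.sum_subset A.subset_univ (fun x _ hx => dif_neg hx),
    ← Finset.sum_attach A (fun i => if h : i ∈ A then g i * μ ⟨i, h⟩ else 0),
    Finset.univ_eq_attach]
  exact Finset.sum_congr rfl fun x _ => by rw [dif_pos x.2]

lemma subRows_tr_mulVec (A : Finset (Fin nc)) (μ : A → ℝ) :
    (subRows G A)ᵀ *ᵥ μ = Gᵀ *ᵥ (fun k => if h : k ∈ A then μ ⟨k, h⟩ else 0) := by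
  funext k
  simp only [Matrix.mulVec, dotProduct, Matrix.transpose_apply, subRows, Matrix.of_apply,
    mul_dite, mul_zero]
  exact sum_subtype_dite A (fun i => G i k) μ

lemma ext_insert_split (A : Finset (Fin nc)) (j : Fin nc) (hj : j ∉ A) (e : Fin nc → ℝ)
    (he : ∀ k, k ∉ insert j A → e k = 0) :
    Gᵀ *ᵥ e = (subRows G A)ᵀ *ᵥ (fun i : A => e i.val) + e j • G j := by
  have h2 : e = (fun k => if h : k ∈ A then e k else 0) + e j • (Pi.single j 1 : Fin nc → ℝ) := by
    funext k
    simp only [Pi.add_apply, Pi.smul_apply, Pi.single_apply, smul_eq_mul]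
    by_cases hk : k ∈ A
    · have hkj : k ≠ j := fun h => hj (h ▸ hk)
      simp [hk, hkj]
    · by_cases hkj : k = j
      · subst hkj; simp [hk]
      · simp [hk, hkj, he k (by simp [hkj, hk])]
  rw [subRows_tr_mulVec]
  conv_lhs => rw [h2]
  rw [Matrix.mulVec_add, Matrix.mulVec_smul]
  congr 1
  funext k
  simp [Matrix.mulVec_single]

lemma tr_mulVec_eq_sum (A : Finset (Fin nc)) (x : A → ℝ) :
    (subRows G A)ᵀ *ᵥ x = ∑ i : A, x i • G i.val := by
  funext k
  simp [Matrix.mulVec, dotProduct, subRows, Finset.sum_apply, mul_comm]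

lemma wmat_posDef (hH : H.PosDef) {A : Finset (Fin nc)} (hA : FullRowRank G A) :
    (Wmat H G A).PosDef := by
  have hHi : H⁻¹.PosDef := hH.inv
  refine posDef_iff_dotProduct_mulVec.mpr ⟨?_, ?_⟩
  · have : Wmat H G A = subRows G A * H⁻¹ * (subRows G A)ᴴ := by
      rw [conjTranspose_eq_transpose_of_trivial]; rfl
    rw [this]
    exact isHermitian_mul_mul_conjTranspose _ hHi.isHermitian
  · intro x hx
    have hy : (subRows G A)ᵀ *ᵥ x ≠ 0 := by
      intro h
      rw [tr_mulVec_eq_sum] at h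
      have := Fintype.linearIndependent_iff.mp hA x ?_
      · exact hx (funext fun i => this i)
      · exact h
    have key : star x ⬝ᵥ (Wmat H G A *ᵥ x) =
        star ((subRows G A)ᵀ *ᵥ x) ⬝ᵥ (H⁻¹ *ᵥ ((subRows G A)ᵀ *ᵥ x)) := by
      simp only [star_trivial, Wmat]
      rw [← Matrix.mulVec_mulVec, ← Matrix.mulVec_mulVec, ← dot_tr_mulVec (subRows G A)]
    rw [key]
    exact hHi.dotProduct_mulVec_pos hy

end Helpers

section Step
variable {m n nc : ℕ}

lemma rows_H_tr (H : Matrix (Fin m) (Fin m) ℝ) (G : Matrix (Fin nc) (Fin m) ℝ)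
    (A : Finset (Fin nc)) (x : A → ℝ) :
    subRows G A *ᵥ (H⁻¹ *ᵥ ((subRows G A)ᵀ *ᵥ x)) = Wmat H G A *ᵥ x := by
  rw [Matrix.mulVec_mulVec, Matrix.mulVec_mulVec]; rfl

lemma rows_H_Gj (H : Matrix (Fin m) (Fin m) ℝ) (G : Matrix (Fin nc) (Fin m) ℝ)
    (A : Finset (Fin nc)) (j : Fin nc) :
    subRows G A *ᵥ (H⁻¹ *ᵥ G j) = wvec H G A j := by
  rw [Matrix.mulVec_mulVec]; rfl

lemma step_insert (H : Matrix (Fin m) (Fin m) ℝ) (hH : H.PosDef)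
    (G : Matrix (Fin nc) (Fin m) ℝ) (b : Fin nc → ℝ) (S : Matrix (Fin nc) (Fin n) ℝ)
    (A : Finset (Fin nc)) (j : Fin nc) (hj : j ∉ A)
    (hA : FullRowRank G A) (hA' : FullRowRank G (insert j A)) (θ : Fin n → ℝ) :
    zOf H G b S (insert j A) θ =
      zOf H G b S A θ + (cVal H G b A j + vVec H G S A j ⬝ᵥ θ) • fVec H G A j := by
  classical
  have hHi : H⁻¹.PosDef := hH.inv
  have hHisymm : H⁻¹ᵀ = H⁻¹ := by
    rw [← conjTranspose_eq_transpose_of_trivial]; exact hHi.isHermitian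
  have hWpd := wmat_posDef H G hH hA
  have hW'pd := wmat_posDef H G hH hA'
  have hWdet : IsUnit (Wmat H G A).det := (Matrix.isUnit_iff_isUnit_det _).mp hWpd.isUnit
  have hW'det : IsUnit (Wmat H G (insert j A)).det :=
    (Matrix.isUnit_iff_isUnit_det _).mp hW'pd.isUnit
  have hWmul : Wmat H G A * (Wmat H G A)⁻¹ = 1 := Matrix.mul_nonsing_inv _ hWdet
  have hW'invmul : (Wmat H G (insert j A))⁻¹ * Wmat H G (insert j A) = 1 :=
    Matrix.nonsing_inv_mul _ hW'det
  have hWsymm : (Wmat H G A)ᵀ = Wmat H G A := by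
    rw [← conjTranspose_eq_transpose_of_trivial]; exact hWpd.isHermitian
  have hWinvsymm : ((Wmat H G A)⁻¹)ᵀ = (Wmat H G A)⁻¹ := by
    rw [Matrix.transpose_nonsing_inv, hWsymm]
  -- abbreviations as local defs (plain lets via notation)
  have hwh : Wmat H G A *ᵥ ((Wmat H G A)⁻¹ *ᵥ wvec H G A j) = wvec H G A j := by
    rw [Matrix.mulVec_mulVec, hWmul, Matrix.one_mulVec]
  have hrowj : ∀ x : A → ℝ,
      G j ⬝ᵥ (H⁻¹ *ᵥ ((subRows G A)ᵀ *ᵥ x)) = wvec H G A j ⬝ᵥ x := by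
    intro x
    rw [← dot_tr_mulVec H⁻¹ (G j), hHisymm, dotProduct_comm, dot_tr_mulVec,
      rows_H_Gj H G A j, dotProduct_comm]
  have hwhdot : ∀ y : A → ℝ,
      ((Wmat H G A)⁻¹ *ᵥ wvec H G A j) ⬝ᵥ y = wvec H G A j ⬝ᵥ ((Wmat H G A)⁻¹ *ᵥ y) := by
    intro y
    conv_lhs => rw [← hWinvsymm]
    exact dot_tr_mulVec _ _ _
  -- α formula
  have hu : (fun i : A => b i.val + (S *ᵥ θ) i.val) = subVec b A + (subRows S A *ᵥ θ) := by
    funext i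
    simp [subVec, subRows, Matrix.mulVec, dotProduct]
  have halpha : cVal H G b A j + vVec H G S A j ⬝ᵥ θ =
      (Cval H G A j)⁻¹ * (wvec H G A j ⬝ᵥ ((Wmat H G A)⁻¹ *ᵥ
        (fun i : A => b i.val + (S *ᵥ θ) i.val)) - (b j + (S *ᵥ θ) j)) := by
    rw [hu, Matrix.mulVec_add, dotProduct_add]
    unfold cVal vVec
    rw [smul_dotProduct, sub_dotProduct, dot_tr_mulVec, hwhdot, smul_eq_mul]
    have hSθ : (S *ᵥ θ) j = S j ⬝ᵥ θ := rfl
    rw [hSθ]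
    ring
  -- the d vector
  have hdsupp : ∀ k, k ∉ insert j A → dExt H G A j k = 0 := by
    intro k hk
    rw [Finset.mem_insert, not_or] at hk
    simp [dExt, hk.1, hk.2]
  have hdj : dExt H G A j j = -1 := by simp [dExt, hj]
  have hdA : (fun i : A => dExt H G A j i.val) =
      (Wmat H G A)⁻¹ *ᵥ wvec H G A j := by
    funext i
    simp [dExt, i.2]
  have hGd : Gᵀ *ᵥ dExt H G A j =
      (subRows G A)ᵀ *ᵥ ((Wmat H G A)⁻¹ *ᵥ wvec H G A j) - G j := by
    rw [ext_insert_split G A j hj _ hdsupp, hdA, hdj]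
    rw [neg_one_smul, ← sub_eq_add_neg]
  -- C positive
  have hCdef : Cval H G A j = w0 H G j -
      wvec H G A j ⬝ᵥ ((Wmat H G A)⁻¹ *ᵥ wvec H G A j) := rfl
  have hCval : Cval H G A j = (Gᵀ *ᵥ dExt H G A j) ⬝ᵥ (H⁻¹ *ᵥ (Gᵀ *ᵥ dExt H G A j)) := by
    rw [hGd, Matrix.mulVec_sub, dotProduct_sub, sub_dotProduct, sub_dotProduct,
      dot_tr_mulVec, dot_tr_mulVec, rows_H_tr, rows_H_Gj, hwh, hrowj, hCdef]
    have h1 : ((Wmat H G A)⁻¹ *ᵥ wvec H G A j) ⬝ᵥ wvec H G A j =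
        wvec H G A j ⬝ᵥ ((Wmat H G A)⁻¹ *ᵥ wvec H G A j) := dotProduct_comm _ _
    rw [h1]
    unfold w0
    ring
  have hgne : Gᵀ *ᵥ dExt H G A j ≠ 0 := by
    intro h0
    have hsum : ∑ i : (insert j A : Finset (Fin nc)),
        dExt H G A j i.val • G i.val = 0 := by
      rw [← tr_mulVec_eq_sum, subRows_tr_mulVec]
      have hfix : (fun k => if h : k ∈ insert j A then dExt H G A j k else 0) =
          dExt H G A j := by
        funext k
        by_cases hk : k ∈ insert j A
        · rw [dif_pos hk]
        · rw [dif_neg hk, hdsupp k hk]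
      rw [hfix]
      exact h0
    have := Fintype.linearIndependent_iff.mp hA' _ hsum
      ⟨j, Finset.mem_insert_self j A⟩
    rw [hdj] at this
    norm_num at this
  have hCpos : 0 < Cval H G A j := by
    rw [hCval]
    have := hHi.dotProduct_mulVec_pos hgne
    rwa [star_trivial] at this
  -- the extended coefficient vector e and candidate solution z'
  set α := cVal H G b A j + vVec H G S A j ⬝ᵥ θ with hαdef
  set e : Fin nc → ℝ := α • dExt H G A j - lamExt H G b S A θ with hedef
  have hlamsupp : ∀ k, k ∉ A → lamExt H G b S A θ k = 0 := by
    intro k hk; simp [lamExt, hk]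
  have hesupp : ∀ k, k ∉ insert j A → e k = 0 := by
    intro k hk
    have hkA : k ∉ A := fun h => hk (Finset.mem_insert_of_mem h)
    simp [hedef, hdsupp k hk, hlamsupp k hkA]
  have hlamext : Gᵀ *ᵥ lamExt H G b S A θ = (subRows G A)ᵀ *ᵥ lamOf H G b S A θ := by
    rw [subRows_tr_mulVec]
    rfl
  have hfeq : fVec H G A j = (H⁻¹ * Gᵀ) *ᵥ dExt H G A j := by
    unfold fVec
    rw [← Matrix.mulVec_mulVec, ← Matrix.mulVec_mulVec, subRows_tr_mulVec]
    apply congrArg (fun y => H⁻¹ *ᵥ y)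
    apply congrArg (fun y => Gᵀ *ᵥ y)
    funext k
    by_cases hk : k ∈ insert j A
    · rw [dif_pos hk]
    · rw [dif_neg hk, hdsupp k hk]
  have hzeq : zOf H G b S A θ = -((H⁻¹ * Gᵀ) *ᵥ lamExt H G b S A θ) := by
    unfold zOf
    rw [← Matrix.mulVec_mulVec, ← Matrix.mulVec_mulVec, hlamext]
  have hRHS : zOf H G b S A θ + α • fVec H G A j = (H⁻¹ * Gᵀ) *ᵥ e := by
    rw [hzeq, hfeq, hedef, Matrix.mulVec_sub, Matrix.mulVec_smul]
    abel
  -- z' decomposition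
  have hGe : Gᵀ *ᵥ e = α • ((subRows G A)ᵀ *ᵥ ((Wmat H G A)⁻¹ *ᵥ wvec H G A j) - G j)
      - (subRows G A)ᵀ *ᵥ lamOf H G b S A θ := by
    rw [hedef, Matrix.mulVec_sub, Matrix.mulVec_smul, hGd, hlamext]
  have hz'val : (H⁻¹ * Gᵀ) *ᵥ e =
      α • (H⁻¹ *ᵥ ((subRows G A)ᵀ *ᵥ ((Wmat H G A)⁻¹ *ᵥ wvec H G A j)))
      - α • (H⁻¹ *ᵥ G j)
      - H⁻¹ *ᵥ ((subRows G A)ᵀ *ᵥ lamOf H G b S A θ) := by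
    rw [← Matrix.mulVec_mulVec, hGe, Matrix.mulVec_sub, Matrix.mulVec_smul,
      Matrix.mulVec_sub, smul_sub]
  have hlamdef : lamOf H G b S A θ =
      -((Wmat H G A)⁻¹ *ᵥ (fun i : A => b i.val + (S *ᵥ θ) i.val)) := rfl
  -- feasibility on A
  have hTz' : subRows G A *ᵥ ((H⁻¹ * Gᵀ) *ᵥ e) = (fun i : A => b i.val + (S *ᵥ θ) i.val) := by
    rw [hz'val, Matrix.mulVec_sub, Matrix.mulVec_sub, Matrix.mulVec_smul, Matrix.mulVec_smul,
      rows_H_tr, rows_H_tr, rows_H_Gj, hwh, hlamdef, Matrix.mulVec_neg]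
    rw [Matrix.mulVec_mulVec, hWmul, Matrix.one_mulVec]
    simp
  -- feasibility at j
  have hjz' : G j ⬝ᵥ ((H⁻¹ * Gᵀ) *ᵥ e) = b j + (S *ᵥ θ) j := by
    rw [hz'val, dotProduct_sub, dotProduct_sub, dotProduct_smul, dotProduct_smul,
      hrowj, hrowj, hlamdef]
    have h1 : G j ⬝ᵥ (H⁻¹ *ᵥ G j) = w0 H G j := rfl
    rw [h1]
    have h2 : wvec H G A j ⬝ᵥ
        -((Wmat H G A)⁻¹ *ᵥ (fun i : A => b i.val + (S *ᵥ θ) i.val)) =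
        -(wvec H G A j ⬝ᵥ ((Wmat H G A)⁻¹ *ᵥ (fun i : A => b i.val + (S *ᵥ θ) i.val))) := by
      rw [dotProduct_neg]
    rw [h2]
    have hCne : Cval H G A j ≠ 0 := hCpos.ne'
    have hab : α * (wvec H G A j ⬝ᵥ ((Wmat H G A)⁻¹ *ᵥ wvec H G A j)) - α * w0 H G j =
        -(α * Cval H G A j) := by rw [hCdef]; ring
    have hαC : α * Cval H G A j =
        wvec H G A j ⬝ᵥ ((Wmat H G A)⁻¹ *ᵥ (fun i : A => b i.val + (S *ᵥ θ) i.val))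
          - (b j + (S *ᵥ θ) j) := by
      rw [halpha]
      field_simp
    have := hαC
    rw [smul_eq_mul, smul_eq_mul]
    linarith [hαC]
  -- μ' and conclusion
  set μ' : {x : Fin nc // x ∈ insert j A} → ℝ := fun i => -(e i.val) with hμ'def
  have hz'2 : (H⁻¹ * (subRows G (insert j A))ᵀ) *ᵥ μ' = -((H⁻¹ * Gᵀ) *ᵥ e) := by
    rw [← Matrix.mulVec_mulVec, subRows_tr_mulVec]
    have : (fun k => if h : k ∈ insert j A then μ' ⟨k, h⟩ else 0) = -e := by
      funext k
      by_cases hk : k ∈ insert j A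
      · rw [dif_pos hk]; rfl
      · rw [dif_neg hk]
        simp [hesupp k hk]
    rw [this, Matrix.mulVec_neg, Matrix.mulVec_neg, Matrix.mulVec_mulVec]
  have hT'z : subRows G (insert j A) *ᵥ ((H⁻¹ * Gᵀ) *ᵥ e) =
      (fun i : (insert j A : Finset (Fin nc)) => b i.val + (S *ᵥ θ) i.val) := by
    funext i
    rcases Finset.mem_insert.mp i.2 with h | h
    · have : (subRows G (insert j A) *ᵥ ((H⁻¹ * Gᵀ) *ᵥ e)) i =
          G i.val ⬝ᵥ ((H⁻¹ * Gᵀ) *ᵥ e) := rfl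
      rw [this, h]
      exact hjz'

    · have h1 : (subRows G (insert j A) *ᵥ ((H⁻¹ * Gᵀ) *ᵥ e)) i =
          (subRows G A *ᵥ ((H⁻¹ * Gᵀ) *ᵥ e)) ⟨i.val, h⟩ := rfl
      rw [h1, hTz']
  have hWμ : Wmat H G (insert j A) *ᵥ μ' =
      -(fun i : (insert j A : Finset (Fin nc)) => b i.val + (S *ᵥ θ) i.val) := by
    rw [← rows_H_tr H G (insert j A) μ']
    have : H⁻¹ *ᵥ ((subRows G (insert j A))ᵀ *ᵥ μ') =
        (H⁻¹ * (subRows G (insert j A))ᵀ) *ᵥ μ' := Matrix.mulVec_mulVec _ _ _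
    rw [this, hz'2, Matrix.mulVec_neg, hT'z]
  have hμlam : μ' = lamOf H G b S (insert j A) θ := by
    have h2 : μ' = (Wmat H G (insert j A))⁻¹ *ᵥ (Wmat H G (insert j A) *ᵥ μ') := by
      rw [Matrix.mulVec_mulVec, hW'invmul, Matrix.one_mulVec]
    rw [h2, hWμ, Matrix.mulVec_neg]
    rfl
  have hfinal : zOf H G b S (insert j A) θ = (H⁻¹ * Gᵀ) *ᵥ e := by
    unfold zOf
    rw [← hμlam, hz'2, neg_neg]
  rw [hfinal, hRHS]



end Step

/-- Theorem 3, primal part: along a path `A_0, …, A_K` of active sets, each of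
full row rank and each obtained from the previous one by adding or removing a
single constraint `j_l` (with the corresponding rank-one update quantities
`c_l`, `v_l`, `f_l` from Theorem 1, negating `f` for a removal), the primal
solution satisfies `z_{A_K}(θ) = z_{A_0}(θ) + Σ_{l=1}^{K} f_l (c_l + v_lᵀθ)`. -/
theorem primal_path_update
    {m n nc : ℕ} (H : Matrix (Fin m) (Fin m) ℝ) (hH : H.PosDef)
    (G : Matrix (Fin nc) (Fin m) ℝ) (b : Fin nc → ℝ) (S : Matrix (Fin nc) (Fin n) ℝ)
    (K : ℕ) (A : Fin (K + 1) → Finset (Fin nc)) (j : Fin K → Fin nc)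
    (c : Fin K → ℝ) (v : Fin K → Fin n → ℝ) (f : Fin K → Fin m → ℝ)
    (hrank : ∀ l : Fin (K + 1), FullRowRank G (A l))
    (hstep : ∀ l : Fin K,
      (j l ∉ A l.castSucc ∧ A l.succ = insert (j l) (A l.castSucc) ∧
        c l = cVal H G b (A l.castSucc) (j l) ∧
        v l = vVec H G S (A l.castSucc) (j l) ∧
        f l = fVec H G (A l.castSucc) (j l)) ∨
      (j l ∈ A l.castSucc ∧ A l.succ = (A l.castSucc).erase (j l) ∧
        c l = cVal H G b (A l.succ) (j l) ∧
        v l = vVec H G S (A l.succ) (j l) ∧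
        f l = -fVec H G (A l.succ) (j l))) :
    ∀ θ : Fin n → ℝ,
      zOf H G b S (A (Fin.last K)) θ =
        zOf H G b S (A 0) θ + ∑ l : Fin K, (c l + v l ⬝ᵥ θ) • f l := by
  intro θ
  have hstep' : ∀ l : Fin K, zOf H G b S (A l.succ) θ =
      zOf H G b S (A l.castSucc) θ + (c l + v l ⬝ᵥ θ) • f l := by
    intro l
    rcases hstep l with ⟨hjmem, hAeq, hc, hv, hf⟩ | ⟨hjmem, hAeq, hc, hv, hf⟩
    · rw [hAeq, hc, hv, hf]
      exact step_insert H hH G b S (A l.castSucc) (j l) hjmem (hrank l.castSucc)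
        (hAeq ▸ hrank l.succ) θ
    · have hnot : j l ∉ A l.succ := by rw [hAeq]; exact Finset.notMem_erase _ _
      have hins : insert (j l) (A l.succ) = A l.castSucc := by
        rw [hAeq]; exact Finset.insert_erase hjmem
      have hkey := step_insert H hH G b S (A l.succ) (j l) hnot (hrank l.succ)
        (hins ▸ hrank l.castSucc) θ
      rw [hins] at hkey
      rw [hc, hv, hf, hkey]
      simp [smul_neg]
  have tele : ∀ N : ℕ, (hN : N ≤ K) →
      zOf H G b S (A ⟨N, Nat.lt_succ_of_le hN⟩) θ =
        zOf H G b S (A 0) θ + ∑ i ∈ Finset.range N,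
          (if h : i < K then (c ⟨i, h⟩ + v ⟨i, h⟩ ⬝ᵥ θ) • f ⟨i, h⟩ else 0) := by
    intro N
    induction N with
    | zero =>
      intro _
      have h0 : (⟨0, Nat.lt_succ_of_le (Nat.zero_le K)⟩ : Fin (K+1)) = 0 := rfl
      simp [h0]
    | succ N ih =>
      intro hN
      have hNK : N < K := Nat.lt_of_succ_le hN
      rw [Finset.sum_range_succ, ← add_assoc, ← ih (le_of_lt hNK), dif_pos hNK]
      exact hstep' ⟨N, hNK⟩
  have hfin := tele K le_rfl
  have hlast : (⟨K, Nat.lt_succ_of_le le_rfl⟩ : Fin (K+1)) = Fin.last K := rfl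
  rw [hlast] at hfin
  rw [hfin]
  congr 1
  rw [← Fin.sum_univ_eq_sum_range
    (fun i => if h : i < K then (c ⟨i, h⟩ + v ⟨i, h⟩ ⬝ᵥ θ) • f ⟨i, h⟩ else 0) K]
  apply Finset.sum_congr rfl
  intro l _
  rw [dif_pos l.isLt]


end MpQP
end
end

section
/- (Optimality on a critical region.) Fix θ ∈ ℝⁿ and an index set A ⊆ {1,…,n_c} such that G_A has full row rank. If the primal feasibility condition G z_A(θ) ≤ b + Sθ and the dual feasibility condition λ_A(θ) ≥ 0 both hold, then z_A(θ) together with the multiplier λ̃_A(θ) satisfies the KKT conditions H z + Gᵀλ = 0, Gz ≤ b + Sθ, λ ≥ 0, λ_k (G_k z − b_k − S_k θ) = 0 for all k, and z_A(θ) is the unique global minimizer of ½ zᵀHz over {z ∈ ℝ^m : Gz ≤ b + Sθ}. -/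
open Matrix

noncomputable section
namespace MpQP

section Aux
variable {m n nc : ℕ}

lemma subRows_mulVec_s12 (G : Matrix (Fin nc) (Fin m) ℝ) (A : Finset (Fin nc))
    (z : Fin m → ℝ) (i : A) : (subRows G A *ᵥ z) i = (G *ᵥ z) i.val := rfl

lemma transpose_subRows_mulVec (G : Matrix (Fin nc) (Fin m) ℝ) (A : Finset (Fin nc))
    (x : A → ℝ) : (subRows G A)ᵀ *ᵥ x = ∑ i : A, x i • G i.val := by
  funext j
  simp [Matrix.mulVec, dotProduct, subRows, Finset.sum_apply, mul_comm]

lemma wPosDef {H : Matrix (Fin m) (Fin m) ℝ} (hH : H.PosDef)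
    {G : Matrix (Fin nc) (Fin m) ℝ} {A : Finset (Fin nc)} (hA : FullRowRank G A) :
    (subRows G A * H⁻¹ * (subRows G A)ᵀ).PosDef := by
  have hHi := hH.inv
  refine Matrix.PosDef.of_dotProduct_mulVec_pos ?_ ?_
  · have h := hHi.1
    show (subRows G A * H⁻¹ * (subRows G A)ᵀ)ᴴ = _
    calc (subRows G A * H⁻¹ * (subRows G A)ᵀ)ᴴ
        = (subRows G A) * H⁻¹ᴴ * (subRows G A)ᵀ := by
          simp [Matrix.conjTranspose_mul, Matrix.mul_assoc]
      _ = _ := by rw [h]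
  · intro x hx
    have hy : (subRows G A)ᵀ *ᵥ x ≠ 0 := by
      intro h0
      apply hx
      rw [transpose_subRows_mulVec] at h0
      ext i
      exact Fintype.linearIndependent_iff.mp hA x h0 i
    have hpos := hHi.dotProduct_mulVec_pos hy
    have key : x ⬝ᵥ (subRows G A * H⁻¹ * (subRows G A)ᵀ) *ᵥ x
        = ((subRows G A)ᵀ *ᵥ x) ⬝ᵥ H⁻¹ *ᵥ ((subRows G A)ᵀ *ᵥ x) := by
      rw [← Matrix.mulVec_mulVec, ← Matrix.mulVec_mulVec,
        Matrix.dotProduct_mulVec, ← Matrix.mulVec_transpose]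
    simpa [key] using hpos

end Aux

/-- Optimality on a critical region: if `G_A` has full row rank and both the
primal feasibility `G z_A(θ) ≤ b + Sθ` and the dual feasibility `λ_A(θ) ≥ 0`
hold, then `(z_A(θ), λ̃_A(θ))` satisfies the KKT conditions of `QP(θ)` and
`z_A(θ)` is the unique global minimizer of `½ zᵀHz` over `{z : Gz ≤ b + Sθ}`. -/
theorem criticalRegion_optimality
    {m n nc : ℕ} (H : Matrix (Fin m) (Fin m) ℝ) (hH : H.PosDef)
    (G : Matrix (Fin nc) (Fin m) ℝ) (b : Fin nc → ℝ) (S : Matrix (Fin nc) (Fin n) ℝ)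
    (A : Finset (Fin nc)) (hA : FullRowRank G A) (θ : Fin n → ℝ)
    (hprimal : G.mulVec (zOf H G b S A θ) ≤ b + S.mulVec θ)
    (hdual : ∀ i : A, 0 ≤ lamOf H G b S A θ i) :
    H.mulVec (zOf H G b S A θ) + Gᵀ.mulVec (lamExt H G b S A θ) = 0 ∧
    G.mulVec (zOf H G b S A θ) ≤ b + S.mulVec θ ∧
    (∀ k, 0 ≤ lamExt H G b S A θ k) ∧
    (∀ k, lamExt H G b S A θ k *
        (G k ⬝ᵥ zOf H G b S A θ - b k - S.mulVec θ k) = 0) ∧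
    (∀ z : Fin m → ℝ, G.mulVec z ≤ b + S.mulVec θ →
      (1 / 2) * (zOf H G b S A θ ⬝ᵥ H.mulVec (zOf H G b S A θ)) ≤
          (1 / 2) * (z ⬝ᵥ H.mulVec z) ∧
        ((1 / 2) * (z ⬝ᵥ H.mulVec z) =
            (1 / 2) * (zOf H G b S A θ ⬝ᵥ H.mulVec (zOf H G b S A θ)) →
          z = zOf H G b S A θ))  := by
  classical
  set M := subRows G A with hM
  set Λ := lamOf H G b S A θ with hΛ
  set zs := zOf H G b S A θ with hzs
  set lam := lamExt H G b S A θ with hlam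
  have hW : (M * H⁻¹ * Mᵀ).PosDef := wPosDef hH hA
  have hWdet : IsUnit (M * H⁻¹ * Mᵀ).det :=
    (Matrix.isUnit_iff_isUnit_det _).mp hW.isUnit
  have hHdet : IsUnit H.det := (Matrix.isUnit_iff_isUnit_det _).mp hH.isUnit
  -- stationarity pieces
  have hHz : H *ᵥ zs = -(Mᵀ *ᵥ Λ) := by
    rw [hzs]
    unfold zOf
    rw [Matrix.mulVec_neg, Matrix.mulVec_mulVec, ← Matrix.mul_assoc,
      Matrix.mul_nonsing_inv H hHdet, Matrix.one_mul]
  have hGt : Gᵀ *ᵥ lam = Mᵀ *ᵥ Λ := by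
    funext j
    show ∑ k, Gᵀ j k * lam k = ∑ i, Mᵀ j i * Λ i
    rw [← Finset.sum_subset (Finset.subset_univ A) (by
        intro k _ hk
        have h0 : lam k = 0 := by rw [hlam]; unfold lamExt; rw [dif_neg hk]
        simp [h0]),
      ← Finset.sum_attach A (fun k => Gᵀ j k * lam k), Finset.univ_eq_attach]
    apply Finset.sum_congr rfl
    intro i _
    have h1 : lam i.val = Λ i := by rw [hlam]; unfold lamExt; rw [dif_pos i.2]
    rw [h1]; rfl
  have hstat : H *ᵥ zs + Gᵀ *ᵥ lam = 0 := by
    rw [hHz, hGt]; simp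
  -- active constraints hold with equality
  have hact : ∀ i : A, (G *ᵥ zs) i.val = b i.val + (S *ᵥ θ) i.val := by
    intro i
    have key : M *ᵥ zs = fun i : A => b i.val + S.mulVec θ i.val := by
      show M *ᵥ zOf H G b S A θ = _
      unfold zOf lamOf
      rw [← hM]
      simp only [Matrix.mulVec_neg, neg_neg, Matrix.mulVec_mulVec]
      rw [← Matrix.mul_assoc, ← Matrix.mul_assoc,
        Matrix.mul_nonsing_inv _ hWdet, Matrix.one_mulVec]
    have := congrFun key i
    exact this
  have hlamnn : ∀ k, 0 ≤ lam k := by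
    intro k
    rw [hlam]; unfold lamExt
    by_cases h : k ∈ A
    · rw [dif_pos h]; exact hdual ⟨k, h⟩
    · rw [dif_neg h]
  have hcs : ∀ k, lam k * (G k ⬝ᵥ zs - b k - (S *ᵥ θ) k) = 0 := by
    intro k
    by_cases h : k ∈ A
    · have := hact ⟨k, h⟩
      have hGz : G k ⬝ᵥ zs = (G *ᵥ zs) k := rfl
      rw [hGz, this]
      ring
    · have : lam k = 0 := by rw [hlam]; unfold lamExt; rw [dif_neg h]
      rw [this, zero_mul]
  -- symmetry of H
  have hHt : Hᵀ = H := by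
    ext i j
    simpa using congrFun (congrFun hH.1 i) j
  have hsym : ∀ u v : Fin m → ℝ, u ⬝ᵥ H *ᵥ v = v ⬝ᵥ H *ᵥ u := by
    intro u v
    rw [Matrix.dotProduct_mulVec, ← hHt, Matrix.vecMul_transpose, hHt,
      dotProduct_comm]
  refine ⟨hstat, hprimal, hlamnn, hcs, ?_⟩
  intro z hz
  set d := z - zs with hd
  have hzd : z = zs + d := by rw [hd]; ring
  have h1 : H *ᵥ zs = -(Gᵀ *ᵥ lam) := by
    rw [eq_neg_iff_add_eq_zero]; exact hstat
  have hcross : d ⬝ᵥ H *ᵥ zs = -((G *ᵥ d) ⬝ᵥ lam) := by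
    rw [h1, dotProduct_neg, Matrix.dotProduct_mulVec,
      Matrix.vecMul_transpose]
  have hcross_nn : 0 ≤ d ⬝ᵥ H *ᵥ zs := by
    rw [hcross, neg_nonneg]
    apply Finset.sum_nonpos
    intro k _
    by_cases h : k ∈ A
    · have hzsk : (G *ᵥ zs) k = b k + (S *ᵥ θ) k := hact ⟨k, h⟩
      have hdk : (G *ᵥ d) k ≤ 0 := by
        rw [hd, Matrix.mulVec_sub]
        have := hz k
        simp only [Pi.add_apply] at this
        simp [hzsk]
        linarith [hz k, (by rfl : (b + S *ᵥ θ) k = b k + (S *ᵥ θ) k)]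
      exact mul_nonpos_of_nonpos_of_nonneg hdk (hlamnn k)
    · have : lam k = 0 := by rw [hlam]; unfold lamExt; rw [dif_neg h]
      simp [this]
  have hquad_nn : 0 ≤ d ⬝ᵥ H *ᵥ d := by
    have := hH.posSemidef.dotProduct_mulVec_nonneg d
    simpa using this
  have hexpand : z ⬝ᵥ H *ᵥ z
      = zs ⬝ᵥ H *ᵥ zs + 2 * (d ⬝ᵥ H *ᵥ zs) + d ⬝ᵥ H *ᵥ d := by
    rw [hzd, Matrix.mulVec_add, dotProduct_add, add_dotProduct,
      add_dotProduct, hsym zs d]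
    ring
  constructor
  · nlinarith [hcross_nn, hquad_nn]
  · intro heq
    have hq0 : d ⬝ᵥ H *ᵥ d = 0 := by nlinarith [hcross_nn, hquad_nn]
    have hd0 : d = 0 := by
      by_contra hne
      have := hH.dotProduct_mulVec_pos hne
      simp only [star_trivial] at this
      linarith
    rw [hzd, hd0, add_zero]

end MpQP
end
end
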